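/- For positive integers m, k, the product P_{(m)}(x;q,0) · P_{(k)}(x;q,0) of specialized Macdonald polynomials in n+1 variables equals ∑_{i=0}^{min(m,k)} [k choose i]_q [m choose i]_q (1-q)(1-q^2)⋯(1-q^i) · P_{(m+k-i, i, 0, …, 0)}(x;q,0). -/

import Mathlib

open Finset

/-- The Gaussian binomial coefficient `[n choose r]_q`, via the q-Pascal recursion. -/
def qbinom {R : Type*} [CommRing R] (q : R) : ℕ → ℕ → R
  | _, 0 => 1
  | 0, _ + 1 => 0
  | n + 1, r + 1 => qbinom q n r + q ^ (r + 1) * qbinom q n (r + 1)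

/-- `b_λ(s; q, 0)`: the Macdonald `b`-factor specialized at `t = 0`, for the box
`s = (i, j)` (row `i`, 0-indexed column `j`).  At `t = 0` it equals
`(1 - q^{a_λ(s)+1})⁻¹` if `s` lies in the diagram of `λ` with leg length `0`,
and `1` otherwise. -/
noncomputable def b0 {n : ℕ} (lam : Fin n → ℕ) (i : Fin n) (j : ℕ) : RatFunc ℚ :=
  if j < lam i ∧ (Finset.univ.filter (fun i' : Fin n => j < lam i')).card = i.1 + 1
  then (1 - RatFunc.X ^ (lam i - j))⁻¹ else 1

/-- The Pieri coefficient `φ_{λ/μ}(q, 0) = ∏_{s ∈ C_{λ/μ}} b_λ(s)/b_μ(s)`, where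
`C_{λ/μ}` is the union of the columns meeting `λ - μ`; `N` is any upper bound for the
number of columns of `λ`. -/
noncomputable def phi0 {n : ℕ} (N : ℕ) (lam mu : Fin n → ℕ) : RatFunc ℚ :=
  ∏ j ∈ Finset.range N,
    if ∃ i, j < lam i ∧ mu i ≤ j then ∏ i, b0 lam i j * (b0 mu i j)⁻¹ else 1

/-- The set of partitions `λ` such that `λ ⊇ μ` and `λ - μ` is a horizontal strip
of size `m`. -/
def hstrips {n : ℕ} (mu : Fin n → ℕ) (m : ℕ) : Finset (Fin n → ℕ) :=
  ((Finset.univ : Finset ((i : Fin n) → Fin (mu i + m + 1))).image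
      (fun f i => (f i : ℕ))).filter
    (fun lam => (∀ i, mu i ≤ lam i) ∧ (∀ i j : Fin n, i.1 + 1 = j.1 → lam j ≤ mu i)
      ∧ ∑ i, (lam i - mu i) = m)

def qpoch {R : Type*} [CommRing R] (q : R) (n : ℕ) : R :=
  ∏ a ∈ Finset.range n, (1 - q ^ (a + 1))

lemma qbinom_eq_zero {R : Type*} [CommRing R] (q : R) : ∀ n r, n < r → qbinom q n r = 0
  | 0, _ + 1, _ => rfl
  | n + 1, r + 1, h => by
      rw [qbinom, qbinom_eq_zero q n r (by omega), qbinom_eq_zero q n (r+1) (by omega)]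
      ring

lemma qbinom_self {R : Type*} [CommRing R] (q : R) : ∀ n, qbinom q n n = 1
  | 0 => rfl
  | n + 1 => by
      rw [qbinom, qbinom_self q n, qbinom_eq_zero q n (n+1) (by omega)]
      ring

lemma qpoch_succ {R : Type*} [CommRing R] (q : R) (n : ℕ) :
    qpoch q (n+1) = qpoch q n * (1 - q ^ (n+1)) := by
  rw [qpoch, qpoch, prod_range_succ]

lemma qbinom_mul {R : Type*} [CommRing R] (q : R) :
    ∀ n r, r ≤ n → qbinom q n r * (qpoch q r * qpoch q (n - r)) = qpoch q n
  | n, 0, _ => by simp [qbinom, qpoch]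
  | 0, r + 1, h => by omega
  | n + 1, r + 1, h => by
      rcases Nat.lt_or_ge n (r + 1) with hn | hn
      · have hrn : r = n := by omega
        subst hrn
        rw [qbinom, qbinom_eq_zero q r (r+1) (by omega), qbinom_self]
        simp [qpoch]
      · have h1 := qbinom_mul q n r (by omega)
        have h2 := qbinom_mul q n (r+1) hn
        have e1 : qpoch q (n - r) = qpoch q (n - (r+1)) * (1 - q ^ (n - r)) := by
          have : n - r = (n - (r+1)) + 1 := by omega
          rw [this, qpoch_succ]
        have e2 : qpoch q (n + 1 - (r+1)) = qpoch q (n - r) := by congr 1; omega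
        have hq : q ^ (n + 1) = q ^ (r + 1) * q ^ (n - r) := by
          rw [← pow_add]; congr 1; omega
        have er : qpoch q (r+1) = qpoch q r * (1 - q ^ (r+1)) := qpoch_succ q r
        have en : qpoch q (n+1) = qpoch q n * (1 - q ^ (n+1)) := qpoch_succ q n
        rw [qbinom, e2, e1, en]
        rw [er] at h2 ⊢
        rw [e1] at h1
        linear_combination (1 - q ^ (r+1)) * h1 + q^(r+1) * (1 - q^(n-r)) * h2 + qpoch q n * hq

lemma one_sub_X_pow_ne_zero (a : ℕ) : (1 - (RatFunc.X : RatFunc ℚ) ^ (a + 1)) ≠ 0 := by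
  intro h
  have hx : (RatFunc.X : RatFunc ℚ) ^ (a+1) = 1 := by
    linear_combination -h
  have : (algebraMap (Polynomial ℚ) (RatFunc ℚ)) (Polynomial.X ^ (a+1)) =
      (algebraMap (Polynomial ℚ) (RatFunc ℚ)) 1 := by
    simpa [map_pow, RatFunc.algebraMap_X] using hx
  have := RatFunc.algebraMap_injective ℚ this
  have hdeg := congrArg Polynomial.natDegree this
  simp [Polynomial.natDegree_X_pow] at hdeg

lemma qpoch_ne_zero (n : ℕ) : qpoch (RatFunc.X : RatFunc ℚ) n ≠ 0 := by
  rw [qpoch]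
  exact Finset.prod_ne_zero_iff.mpr (fun a _ => one_sub_X_pow_ne_zero a)


section two
variable {M : Type*} {n : ℕ}

lemma prod_fin_two [CommMonoid M] (f : Fin (n+2) → M)
    (h : ∀ i : Fin (n+2), 2 ≤ i.1 → f i = 1) : ∏ i, f i = f 0 * f 1 := by
  rw [Fin.prod_univ_succ, Fin.prod_univ_succ, Fin.succ_zero_eq_one]
  rw [Finset.prod_eq_one (fun i _ => h i.succ.succ (by simp [Fin.val_succ]))]
  rw [mul_one]

lemma sum_fin_two [AddCommMonoid M] (f : Fin (n+2) → M)
    (h : ∀ i : Fin (n+2), 2 ≤ i.1 → f i = 0) : ∑ i, f i = f 0 + f 1 := by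
  rw [Fin.sum_univ_succ, Fin.sum_univ_succ, Fin.succ_zero_eq_one]
  rw [Finset.sum_eq_zero (fun i _ => h i.succ.succ (by simp [Fin.val_succ]))]
  rw [add_zero]

end two

def rowmu (n m : ℕ) : Fin (n+2) → ℕ := fun r => if r = 0 then m else 0
def rowlam (n m k s : ℕ) : Fin (n+2) → ℕ :=
  fun r => if r = 0 then m + k - s else if r = 1 then s else 0

lemma fin_two_ge {n : ℕ} (i : Fin (n+2)) (h0 : i ≠ 0) (h1 : i ≠ 1) : 2 ≤ i.1 := by
  rcases i with ⟨v, hv⟩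
  have e0 : ((0 : Fin (n+2)) : ℕ) = 0 := rfl
  have e1 : ((1 : Fin (n+2)) : ℕ) = 1 := rfl
  have : v ≠ 0 := fun hh => h0 (Fin.ext (by simp [hh, e0]))
  have : v ≠ 1 := fun hh => h1 (Fin.ext (by simp [hh, e1]))
  omega

lemma rowlam_two {n m k s : ℕ} (i : Fin (n+2)) (h : 2 ≤ i.1) : rowlam n m k s i = 0 := by
  have h0 : i ≠ 0 := by intro hh; subst hh; simp at h
  have h1 : i ≠ 1 := by intro hh; subst hh; simp [Fin.val_one] at h
  simp [rowlam, h0, h1]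

lemma rowmu_one {n m : ℕ} (i : Fin (n+2)) (h : 1 ≤ i.1) : rowmu n m i = 0 := by
  have h0 : i ≠ 0 := by intro hh; subst hh; simp at h
  simp [rowmu, h0]

lemma card_rowlam {n m k s : ℕ} (j : ℕ) :
    ((Finset.univ.filter (fun i' : Fin (n+2) => j < rowlam n m k s i')).card : ℕ)
      = (if j < m + k - s then 1 else 0) + (if j < s then 1 else 0) := by
  rw [Finset.card_filter]
  rw [sum_fin_two (fun i => if j < rowlam n m k s i then 1 else 0)
    (fun i hi => by simp [rowlam_two i hi])]
  have h0 : rowlam n m k s 0 = m + k - s := rfl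
  have h1 : rowlam n m k s 1 = s := by
    have : (1 : Fin (n+2)) ≠ 0 := by
      intro hh
      have := congrArg Fin.val hh
      simp [Fin.val_one] at this
    simp [rowlam, this]
  rw [h0, h1]

lemma card_rowmu {n m : ℕ} (j : ℕ) :
    ((Finset.univ.filter (fun i' : Fin (n+2) => j < rowmu n m i')).card : ℕ)
      = if j < m then 1 else 0 := by
  rw [Finset.card_filter]
  rw [sum_fin_two (fun i => if j < rowmu n m i then 1 else 0)
    (fun i hi => by simp [rowmu_one i (by omega)])]
  have h1 : rowmu n m 1 = 0 := rowmu_one 1 (by simp [Fin.val_one])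
  have h0 : rowmu n m 0 = m := rfl
  rw [h0, h1]
  simp

lemma fin1_ne_0 {n : ℕ} : (1 : Fin (n+2)) ≠ 0 := by
  intro hh
  have := congrArg Fin.val hh
  simp [Fin.val_one] at this

lemma rowlam_zero {n m k s : ℕ} : rowlam n m k s 0 = m + k - s := rfl
lemma rowlam_one {n m k s : ℕ} : rowlam n m k s 1 = s := by
  simp [rowlam, fin1_ne_0]
lemma rowmu_zero {n m : ℕ} : rowmu n m 0 = m := rfl

lemma b0_rowlam_zero {n m k s : ℕ} (hsm : s ≤ m) (j : ℕ) :
    b0 (rowlam n m k s) 0 j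
      = if s ≤ j ∧ j < m + k - s then (1 - RatFunc.X ^ (m + k - s - j))⁻¹ else 1 := by
  rw [b0, card_rowlam, rowlam_zero]
  have hv : ((0 : Fin (n+2)) : ℕ) = 0 := rfl
  rw [hv]
  by_cases hc : s ≤ j ∧ j < m + k - s
  · rw [if_pos hc, if_pos ⟨hc.2, by rw [if_pos hc.2, if_neg (by omega)]⟩]
  · rw [if_neg hc, if_neg]
    rintro ⟨hj, hsum⟩
    rw [if_pos hj] at hsum
    by_cases hjs : j < s
    · rw [if_pos hjs] at hsum; omega
    · exact hc ⟨by omega, hj⟩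

lemma b0_rowlam_one {n m k s : ℕ} (hsm : s ≤ m) (hsk : s ≤ k) (j : ℕ) :
    b0 (rowlam n m k s) 1 j = if j < s then (1 - RatFunc.X ^ (s - j))⁻¹ else 1 := by
  rw [b0, card_rowlam, rowlam_one]
  have hv : ((1 : Fin (n+2)) : ℕ) = 1 := Fin.val_one _
  rw [hv]
  by_cases hc : j < s
  · rw [if_pos hc, if_pos (⟨hc, by split_ifs <;> omega⟩ : _ ∧ _), if_pos hc]
  · rw [if_neg hc, if_neg (by rintro ⟨hj, _⟩; exact hc hj), if_neg hc]

lemma b0_rowlam_two {n m k s : ℕ} (i : Fin (n+2)) (hi : 2 ≤ i.1) (j : ℕ) :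
    b0 (rowlam n m k s) i j = 1 := by
  rw [b0, if_neg]
  rintro ⟨hj, _⟩
  rw [rowlam_two i hi] at hj
  omega

lemma b0_rowmu_zero {n m : ℕ} (j : ℕ) :
    b0 (rowmu n m) (0 : Fin (n+2)) j = if j < m then (1 - RatFunc.X ^ (m - j))⁻¹ else 1 := by
  rw [b0, card_rowmu, rowmu_zero]
  have hv : ((0 : Fin (n+2)) : ℕ) = 0 := rfl
  rw [hv]
  by_cases hc : j < m
  · rw [if_pos hc, if_pos (⟨hc, by omega⟩ : _ ∧ _), if_pos hc]
  · rw [if_neg hc, if_neg (by rintro ⟨hj, _⟩; exact hc hj), if_neg hc]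

lemma b0_rowmu_one {n m : ℕ} (i : Fin (n+2)) (hi : 1 ≤ i.1) (j : ℕ) :
    b0 (rowmu n m) i j = 1 := by
  rw [b0, if_neg]
  rintro ⟨hj, _⟩
  rw [rowmu_one i hi] at hj
  omega

lemma cond_row {n m k s : ℕ} (j : ℕ) :
    (∃ i : Fin (n+2), j < rowlam n m k s i ∧ rowmu n m i ≤ j)
      ↔ (j < s ∨ (m ≤ j ∧ j < m + k - s)) := by
  constructor
  · rintro ⟨i, h1, h2⟩
    by_cases hi0 : i = 0
    · subst hi0
      right
      rw [rowlam_zero] at h1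
      rw [rowmu_zero] at h2
      exact ⟨h2, h1⟩
    · by_cases hi1 : i = 1
      · subst hi1
        rw [rowlam_one] at h1
        exact Or.inl h1
      · rw [rowlam_two i (fin_two_ge i hi0 hi1)] at h1
        omega
  · rintro (h | ⟨h1, h2⟩)
    · exact ⟨1, by rw [rowlam_one]; exact h,
        by rw [rowmu_one 1 (by simp [Fin.val_one])]; exact Nat.zero_le j⟩
    · exact ⟨0, by rw [rowlam_zero]; exact h2, by rw [rowmu_zero]; exact h1⟩

lemma prod_one_sub_rev (c : ℕ) :
    ∏ j ∈ Finset.range c, (1 - (RatFunc.X : RatFunc ℚ) ^ (c - j))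
      = qpoch RatFunc.X c := by
  rw [qpoch, ← Finset.prod_range_reflect (fun a => 1 - (RatFunc.X : RatFunc ℚ) ^ (a + 1)) c]
  refine Finset.prod_congr rfl fun j hj => ?_
  rw [Finset.mem_range] at hj
  have : c - 1 - j + 1 = c - j := by omega
  rw [this]

lemma prod_one_sub_shift (b c : ℕ) :
    ∏ j ∈ Finset.range c, (1 - (RatFunc.X : RatFunc ℚ) ^ (b + c - j))
      = qpoch RatFunc.X (b + c) * (qpoch RatFunc.X b)⁻¹ := by
  have h : qpoch (RatFunc.X : RatFunc ℚ) (b + c)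
      = qpoch RatFunc.X b * ∏ j ∈ Finset.range c, (1 - (RatFunc.X : RatFunc ℚ) ^ (b + c - j)) := by
    rw [qpoch, Finset.prod_range_add, ← qpoch]
    congr 1
    rw [← Finset.prod_range_reflect (fun a => 1 - (RatFunc.X : RatFunc ℚ) ^ (b + a + 1)) c]
    refine Finset.prod_congr rfl fun j hj => ?_
    rw [Finset.mem_range] at hj
    have : b + (c - 1 - j) + 1 = b + c - j := by omega
    rw [this]
  rw [eq_mul_inv_iff_mul_eq₀ (qpoch_ne_zero b), mul_comm]
  exact h.symm

lemma phi0_row {n m k s : ℕ} (hsm : s ≤ m) (hsk : s ≤ k) :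
    phi0 (m + k) (rowlam n m k s) (rowmu n m)
      = qpoch RatFunc.X m * (qpoch RatFunc.X (m - s))⁻¹ * (qpoch RatFunc.X s)⁻¹
          * (qpoch RatFunc.X (k - s))⁻¹ := by
  rw [phi0]
  have hfac : ∀ j : ℕ,
      (if ∃ i, j < rowlam n m k s i ∧ rowmu n m i ≤ j
        then ∏ i, b0 (rowlam n m k s) i j * (b0 (rowmu n m) i j)⁻¹ else 1)
      = (if j < s then (1 - RatFunc.X ^ (m - j)) * (1 - RatFunc.X ^ (s - j))⁻¹ else 1)
        * (if m ≤ j ∧ j < m + k - s then (1 - RatFunc.X ^ (m + k - s - j))⁻¹ else 1) := by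
    intro j
    have hprod : (∏ i, b0 (rowlam n m k s) i j * (b0 (rowmu n m) i j)⁻¹)
        = (b0 (rowlam n m k s) 0 j * (b0 (rowmu n m) 0 j)⁻¹)
          * (b0 (rowlam n m k s) 1 j * (b0 (rowmu n m) 1 j)⁻¹) := by
      refine prod_fin_two _ fun i hi => ?_
      rw [b0_rowlam_two i hi, b0_rowmu_one i (by omega), inv_one, mul_one]
    by_cases h1 : j < s
    · rw [if_pos ((cond_row j).mpr (Or.inl h1)), hprod,
        b0_rowlam_zero hsm j, b0_rowlam_one hsm hsk j, b0_rowmu_zero j,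
        if_neg (by omega : ¬(s ≤ j ∧ j < m + k - s)), if_pos h1,
        if_pos (by omega : j < m), if_pos h1, if_neg (by omega : ¬(m ≤ j ∧ j < m + k - s)),
        b0_rowmu_one 1 (by simp [Fin.val_one]), inv_inv]
      ring
    · by_cases h2 : m ≤ j ∧ j < m + k - s
      · rw [if_pos ((cond_row j).mpr (Or.inr h2)), hprod,
          b0_rowlam_zero hsm j, b0_rowlam_one hsm hsk j, b0_rowmu_zero j,
          if_pos (⟨by omega, h2.2⟩ : s ≤ j ∧ j < m + k - s), if_neg h1,
          if_neg (by omega : ¬ j < m), if_neg h1, if_pos h2,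
          b0_rowmu_one 1 (by simp [Fin.val_one])]
        ring
      · rw [if_neg (fun hc => by rcases (cond_row j).mp hc with h | h <;> omega),
          if_neg h1, if_neg h2, mul_one]
  rw [Finset.prod_congr rfl fun j _ => hfac j, Finset.prod_mul_distrib]
  have hA : (∏ j ∈ Finset.range (m + k),
      (if j < s then (1 - (RatFunc.X : RatFunc ℚ) ^ (m - j)) * (1 - RatFunc.X ^ (s - j))⁻¹ else 1))
      = qpoch RatFunc.X m * (qpoch RatFunc.X (m - s))⁻¹ * (qpoch RatFunc.X s)⁻¹ := by
    rw [← Finset.prod_subset (Finset.range_subset_range.mpr (by omega : s ≤ m + k))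
      (fun x _ hx => if_neg (by rw [Finset.mem_range] at hx; omega))]
    rw [Finset.prod_congr rfl (fun j hj => if_pos (Finset.mem_range.mp hj)),
      Finset.prod_mul_distrib, Finset.prod_inv_distrib]
    rw [prod_one_sub_rev s]
    congr 1
    have : ∀ j ∈ Finset.range s, (1 - (RatFunc.X : RatFunc ℚ) ^ (m - j))
        = 1 - RatFunc.X ^ ((m - s) + s - j) := by
      intro j hj
      have : m - j = m - s + s - j := by omega
      rw [this]
    rw [Finset.prod_congr rfl this, prod_one_sub_shift (m - s) s]
    congr 2
    omega
  have hB : (∏ j ∈ Finset.range (m + k),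
      (if m ≤ j ∧ j < m + k - s then (1 - (RatFunc.X : RatFunc ℚ) ^ (m + k - s - j))⁻¹ else 1))
      = (qpoch RatFunc.X (k - s))⁻¹ := by
    have hsub : Finset.Ico m (m + k - s) ⊆ Finset.range (m + k) := by
      intro x hx
      rw [Finset.mem_Ico] at hx
      rw [Finset.mem_range]
      omega
    rw [Finset.range_eq_Ico, ← Finset.prod_subset (Finset.range_eq_Ico (m + k) ▸ hsub)
      (fun x _ hx => if_neg (by rw [Finset.mem_Ico] at hx; omega))]
    rw [Finset.prod_congr rfl (fun j hj => if_pos (Finset.mem_Ico.mp hj))]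
    rw [Finset.prod_Ico_eq_prod_range, Finset.prod_inv_distrib]
    have hlen : m + k - s - m = k - s := by omega
    rw [hlen]
    congr 1
    have : ∀ j ∈ Finset.range (k - s), (1 - (RatFunc.X : RatFunc ℚ) ^ (m + k - s - (m + j)))
        = 1 - RatFunc.X ^ ((k - s) - j) := by
      intro j hj
      have : m + k - s - (m + j) = k - s - j := by omega
      rw [this]
    rw [Finset.prod_congr rfl this, prod_one_sub_rev (k - s)]
  rw [hA, hB]

lemma coeff_row {n m k s : ℕ} (hsm : s ≤ m) (hsk : s ≤ k) :
    qpoch (RatFunc.X : RatFunc ℚ) k * phi0 (m + k) (rowlam n m k s) (rowmu n m)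
      = qbinom RatFunc.X k s * qbinom RatFunc.X m s * qpoch RatFunc.X s := by
  rw [phi0_row hsm hsk]
  have h1 := qbinom_mul (RatFunc.X : RatFunc ℚ) m s hsm
  have h2 := qbinom_mul (RatFunc.X : RatFunc ℚ) k s hsk
  have n1 := qpoch_ne_zero (m - s)
  have n2 := qpoch_ne_zero s
  have n3 := qpoch_ne_zero (k - s)
  rw [← h1, ← h2]
  field_simp

lemma hstrips_row (n m k : ℕ) :
    hstrips (rowmu n m) k = (Finset.range (min m k + 1)).image (rowlam n m k) := by
  ext lam
  simp only [hstrips, Finset.mem_filter, Finset.mem_image, Finset.mem_range, Finset.mem_univ,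
    true_and]
  constructor
  · rintro ⟨-, h1, h2, h3⟩
    have hzero : ∀ i : Fin (n+2), 2 ≤ i.1 → lam i = 0 := by
      intro i hi
      have hlt : i.1 - 1 < n + 2 := by omega
      have := h2 ⟨i.1 - 1, hlt⟩ i (by simp; omega)
      rwa [rowmu_one ⟨i.1 - 1, hlt⟩ (by simp; omega), Nat.le_zero] at this
    have h10 : lam 1 ≤ m := by
      have := h2 0 1 (by simp [Fin.val_one])
      rwa [rowmu_zero] at this
    have hm0 : m ≤ lam 0 := by have := h1 0; rwa [rowmu_zero] at this
    have hsum : (lam 0 - m) + lam 1 = k := by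
      rw [sum_fin_two (fun i => lam i - rowmu n m i)
        (fun i hi => by show lam i - rowmu n m i = 0; rw [hzero i hi]; simp)] at h3
      rwa [rowmu_zero, rowmu_one 1 (by simp [Fin.val_one]), Nat.sub_zero] at h3
    refine ⟨lam 1, by omega, ?_⟩
    funext i
    by_cases hi0 : i = 0
    · subst hi0; rw [rowlam_zero]; omega
    · by_cases hi1 : i = 1
      · subst hi1; rw [rowlam_one]
      · rw [rowlam_two i (fin_two_ge i hi0 hi1)]
        exact (hzero i (fin_two_ge i hi0 hi1)).symm
  · rintro ⟨s, hs, rfl⟩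
    have hsm : s ≤ m := by omega
    have hsk : s ≤ k := by omega
    have hbd : ∀ i : Fin (n+2), rowlam n m k s i < rowmu n m i + k + 1 := by
      intro i
      by_cases hi0 : i = 0
      · subst hi0; rw [rowlam_zero, rowmu_zero]; omega
      · by_cases hi1 : i = 1
        · subst hi1; rw [rowlam_one]; omega
        · rw [rowlam_two i (fin_two_ge i hi0 hi1)]; omega
    refine ⟨⟨fun i => ⟨rowlam n m k s i, hbd i⟩, rfl⟩, ?_, ?_, ?_⟩
    · intro i
      by_cases hi0 : i = 0
      · subst hi0; rw [rowlam_zero, rowmu_zero]; omega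
      · rw [rowmu_one i (by have : i.1 ≠ 0 := fun h => hi0 (Fin.ext h); omega)]
        exact Nat.zero_le _
    · intro i j hij
      by_cases hi0 : i = 0
      · subst hi0
        have hj : j = 1 := by
          have h0 : ((0 : Fin (n+2)) : ℕ) = 0 := rfl
          rw [h0] at hij
          exact Fin.ext (by rw [Fin.val_one]; omega)
        subst hj
        rw [rowlam_one, rowmu_zero]
        exact hsm
      · have hj2 : 2 ≤ j.1 := by
          have : i.1 ≠ 0 := fun h => hi0 (Fin.ext h)
          omega
        rw [rowlam_two j hj2]
        exact Nat.zero_le _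
    · rw [sum_fin_two (fun i => rowlam n m k s i - rowmu n m i)
        (fun i hi => by show rowlam n m k s i - rowmu n m i = 0; rw [rowlam_two i hi]; simp)]
      rw [rowlam_zero, rowlam_one, rowmu_zero, rowmu_one 1 (by simp [Fin.val_one])]
      omega

set_option maxHeartbeats 1000000 in
theorem stmt7 {A : Type} [CommRing A] [Algebra (RatFunc ℚ) A] (n m k : ℕ)
    (hn : 1 ≤ n) (hm : 0 < m) (hk : 0 < k)
    (P : (Fin (n+1) → ℕ) → A) (g : ℕ → A)
    (hPg : ∀ l : ℕ, P (fun r => if r = 0 then l else 0)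
      = algebraMap (RatFunc ℚ) A (∏ a ∈ Finset.range l, (1 - RatFunc.X ^ (a + 1))) * g l)
    (hPieri : ∀ (mu : Fin (n+1) → ℕ), Antitone mu → ∀ l : ℕ,
      P mu * g l = ∑ lam ∈ hstrips mu l,
        algebraMap (RatFunc ℚ) A (phi0 (mu 0 + l) lam mu) * P lam) :
    P (fun r => if r = 0 then m else 0) * P (fun r => if r = 0 then k else 0)
      = ∑ i ∈ Finset.range (min m k + 1),
          algebraMap (RatFunc ℚ) A (qbinom (RatFunc.X : RatFunc ℚ) k i
              * qbinom (RatFunc.X : RatFunc ℚ) m i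
              * ∏ a ∈ Finset.range i, (1 - RatFunc.X ^ (a + 1)))
            * P (fun r => if r = 0 then m + k - i else if r = 1 then i else 0) := by
  obtain ⟨N, rfl⟩ : ∃ N, n = N + 1 := ⟨n - 1, by omega⟩
  have hanti : Antitone (fun r : Fin (N+1+1) => if r = 0 then m else 0) := by
    intro a b hab
    by_cases hb : b = 0
    · subst hb
      have ha : a = 0 := Fin.le_zero_iff.mp hab
      subst ha
      exact le_refl _
    · show (if b = 0 then m else 0) ≤ (if a = 0 then m else 0)
      rw [if_neg hb]
      exact Nat.zero_le _
  have inj : ∀ x ∈ Finset.range (min m k + 1), ∀ y ∈ Finset.range (min m k + 1),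
      rowlam N m k x = rowlam N m k y → x = y := by
    intro x _ y _ hxy
    have := congrFun hxy 1
    rwa [rowlam_one, rowlam_one] at this
  have sumeq : ∀ F : (Fin (N+2) → ℕ) → A,
      ∑ lam ∈ hstrips (rowmu N m) k, F lam
        = ∑ s ∈ Finset.range (min m k + 1), F (rowlam N m k s) := by
    intro F
    rw [hstrips_row, Finset.sum_image inj]
  have step3 : (algebraMap (RatFunc ℚ) A (qpoch RatFunc.X k))
        * ∑ s ∈ Finset.range (min m k + 1),
            algebraMap (RatFunc ℚ) A (phi0 (m + k) (rowlam N m k s) (rowmu N m))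
              * P (rowlam N m k s)
      = ∑ s ∈ Finset.range (min m k + 1),
          algebraMap (RatFunc ℚ) A (qbinom RatFunc.X k s * qbinom RatFunc.X m s
              * qpoch RatFunc.X s)
            * P (rowlam N m k s) := by
    rw [Finset.mul_sum]
    refine Finset.sum_congr rfl fun s hs => ?_
    rw [Finset.mem_range] at hs
    rw [← mul_assoc, ← map_mul, coeff_row (by omega) (by omega)]
  calc P (fun r => if r = 0 then m else 0) * P (fun r => if r = 0 then k else 0)
      = algebraMap (RatFunc ℚ) A (∏ a ∈ Finset.range k, (1 - RatFunc.X ^ (a + 1)))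
          * (P (fun r => if r = 0 then m else 0) * g k) := by
        rw [hPg k]; ring
    _ = algebraMap (RatFunc ℚ) A (∏ a ∈ Finset.range k, (1 - RatFunc.X ^ (a + 1)))
          * ∑ lam ∈ hstrips (fun r => if r = 0 then m else 0) k,
              algebraMap (RatFunc ℚ) A
                  (phi0 ((fun r : Fin (N+1+1) => if r = 0 then m else 0) 0 + k) lam
                    (fun r => if r = 0 then m else 0))
                * P lam := by
        rw [hPieri (fun r => if r = 0 then m else 0) hanti k]
    _ = (algebraMap (RatFunc ℚ) A (qpoch RatFunc.X k))
          * ∑ s ∈ Finset.range (min m k + 1),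
              algebraMap (RatFunc ℚ) A (phi0 (m + k) (rowlam N m k s) (rowmu N m))
                * P (rowlam N m k s) := by
        exact congrArg _ (sumeq _)
    _ = ∑ s ∈ Finset.range (min m k + 1),
          algebraMap (RatFunc ℚ) A (qbinom RatFunc.X k s * qbinom RatFunc.X m s
              * qpoch RatFunc.X s)
            * P (rowlam N m k s) := step3
    _ = ∑ i ∈ Finset.range (min m k + 1),
          algebraMap (RatFunc ℚ) A (qbinom (RatFunc.X : RatFunc ℚ) k i
              * qbinom (RatFunc.X : RatFunc ℚ) m i
              * ∏ a ∈ Finset.range i, (1 - RatFunc.X ^ (a + 1)))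
            * P (fun r => if r = 0 then m + k - i else if r = 1 then i else 0) := rfl
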